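/- arXiv:1604.01502 — 2 statements merged into one kernel-verified Lean document; each statement's English description precedes it below -/
import Mathlib

section
/- Let P be a set of m points in ℝ³ and let S be a finite set of n pairwise distinct spheres in ℝ³ such that no sphere of S is strongly degenerate with respect to P, i.e., for every s ∈ S the set P ∩ s is not contained in any single circle. Then the number of incidences satisfies I(P,S) ≤ m⁴ + 3n. -/
open scoped BigOperators

noncomputable section

abbrev E3 : Type := EuclideanSpace ℝ (Fin 3)

/-- A sphere in ℝ³: the set of points at a fixed positive distance (the radius)
from a fixed center. -/
def IsSphere (s : Set E3) : Prop :=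
  ∃ (o : E3) (r : ℝ), 0 < r ∧ s = Metric.sphere o r

/-- A plane in ℝ³. -/
def IsPlane (π : Set E3) : Prop :=
  ∃ (a u : E3), ‖u‖ = 1 ∧ π = {x : E3 | inner ℝ (x - a) u = (0 : ℝ)}

/-- A circle in ℝ³: the intersection of a sphere with a plane whose distance
from the sphere's center is less than the radius. -/
def IsCircle (c : Set E3) : Prop :=
  ∃ (o : E3) (r : ℝ) (π : Set E3), 0 < r ∧ IsPlane π ∧
    Metric.infDist o π < r ∧ c = Metric.sphere o r ∩ π

/-- The real zero set in ℝ³ of a polynomial in three variables. -/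
def zeroSet (f : MvPolynomial (Fin 3) ℝ) : Set E3 :=
  {x : E3 | MvPolynomial.eval (fun i => x i) f = 0}

/-- An algebraic surface of degree `D` in ℝ³. -/
def IsAlgSurf (D : ℕ) (V : Set E3) : Prop :=
  ∃ f : MvPolynomial (Fin 3) ℝ, f ≠ 0 ∧ f.totalDegree = D ∧ V = zeroSet f

/-- An algebraic surface of degree `D` in ℝ³ with no linear or spherical components. -/
def IsAlgSurfNLS (D : ℕ) (V : Set E3) : Prop :=
  ∃ f : MvPolynomial (Fin 3) ℝ, f ≠ 0 ∧ f.totalDegree = D ∧ V = zeroSet f ∧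
    ∀ g : MvPolynomial (Fin 3) ℝ, Irreducible g → g ∣ f →
      ¬ IsPlane (zeroSet g) ∧ ¬ IsSphere (zeroSet g)

/-- The (edge set of the) incidence graph between points and spheres. -/
def IncSet (P : Set E3) (S : Set (Set E3)) : Set (E3 × Set E3) :=
  {ps : E3 × Set E3 | ps.1 ∈ P ∧ ps.2 ∈ S ∧ ps.1 ∈ ps.2}
section Aux

open Module

lemma exists_unit_orth (W : Submodule ℝ E3) (hW : W ≠ ⊤) :
    ∃ u : E3, ‖u‖ = 1 ∧ ∀ v ∈ W, inner ℝ v u = (0:ℝ) := by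
  have hbot : Wᗮ ≠ ⊥ := by
    intro h
    exact hW (by simpa [h] using (Submodule.orthogonal_orthogonal W).symm)
  obtain ⟨u0, hu0, hne⟩ := Submodule.exists_mem_ne_zero_of_ne_bot hbot
  refine ⟨‖u0‖⁻¹ • u0, ?_, ?_⟩
  · simp [norm_smul, inv_mul_cancel₀ (norm_ne_zero_iff.mpr hne)]
  · intro v hv
    have h0 : inner ℝ v u0 = (0:ℝ) := (Submodule.mem_orthogonal W u0).mp hu0 v hv
    rw [real_inner_smul_right, h0, mul_zero]

lemma pyth (o a u x : E3) (hu : ‖u‖ = 1) (hx : inner ℝ (x - a) u = (0:ℝ)) :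
    ‖x - o‖^2 = ‖x - (o - (inner ℝ (o-a) u : ℝ) • u)‖^2 + (inner ℝ (o-a) u : ℝ)^2 := by
  set t : ℝ := inner ℝ (o-a) u with ht
  set f : E3 := o - t • u with hf
  have hfu : inner ℝ (x - f) u = (0:ℝ) := by
    have : x - f = (x - a) + ((a - o) + t • u) := by rw [hf]; abel
    rw [this, inner_add_left, hx, inner_add_left, real_inner_smul_left,
      real_inner_self_eq_norm_sq, hu]
    have : inner ℝ (a - o) u = -t := by rw [ht, ← inner_neg_left]; norm_num
    rw [this]; ring
  have hxo : x - o = (x - f) + (-t) • u := by rw [hf]; module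
  rw [hxo, norm_add_sq_real, real_inner_smul_right, hfu, norm_smul, hu]
  rw [mul_pow, hf]; simp [sq_abs]

lemma mk_circle (o : E3) (r : ℝ) (hr : 0 < r) (a u : E3) (hu : ‖u‖ = 1)
    (T : Set E3) (hT : ∀ p ∈ T, inner ℝ (p - a) u = (0:ℝ))
    (hlt : |(inner ℝ (o - a) u : ℝ)| < r) :
    ∃ c, IsCircle c ∧ T ∩ Metric.sphere o r ⊆ c := by
  set t : ℝ := inner ℝ (o-a) u with ht
  set f : E3 := o - t • u with hf
  refine ⟨Metric.sphere o r ∩ {x : E3 | inner ℝ (x - a) u = (0:ℝ)},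
    ⟨o, r, _, hr, ⟨a, u, hu, rfl⟩, ?_, rfl⟩, ?_⟩
  · have hfπ : f ∈ {x : E3 | inner ℝ (x - a) u = (0:ℝ)} := by
      simp only [Set.mem_setOf_eq, hf]
      rw [sub_right_comm, inner_sub_left, real_inner_smul_left,
        real_inner_self_eq_norm_sq, hu, ← ht]
      ring
    calc Metric.infDist o {x : E3 | inner ℝ (x - a) u = (0:ℝ)} ≤ dist o f :=
          Metric.infDist_le_dist_of_mem hfπ
      _ = |t| := by rw [dist_eq_norm, hf]; simp [norm_smul, hu]
      _ < r := hlt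
  · rintro p ⟨hpT, hps⟩
    exact ⟨hps, hT p hpT⟩

lemma span_pair_ne_top (v w : E3) : Submodule.span ℝ {v, w} ≠ ⊤ := by
  classical
  intro h
  have he : ({v, w} : Set E3) = ↑({v, w} : Finset E3) := by simp
  have h1 : Module.finrank ℝ (Submodule.span ℝ ({v, w} : Set E3)) ≤ ({v,w} : Finset E3).card := by
    rw [he]; exact finrank_span_finset_le_card _
  have h2 : ({v,w} : Finset E3).card ≤ 2 :=
    (Finset.card_insert_le _ _).trans (by norm_num)
  rw [h] at h1
  have h3 : Module.finrank ℝ E3 = 3 := by simp [finrank_euclideanSpace]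
  rw [finrank_top, h3] at h1
  omega

lemma span_singleton_ne_top (v : E3) : Submodule.span ℝ ({v} : Set E3) ≠ ⊤ := by
  have := span_pair_ne_top v v
  simpa [Set.pair_eq_singleton] using this

lemma span_triple_top_of {v1 v2 v3 : E3} (h1 : v1 ≠ 0)
    (h2 : v2 ∉ Submodule.span ℝ ({v1} : Set E3))
    (h3 : v3 ∉ Submodule.span ℝ ({v1, v2} : Set E3)) :
    Submodule.span ℝ ({v1, v2, v3} : Set E3) = ⊤ := by
  have l0 : (⊥ : Submodule ℝ E3) < Submodule.span ℝ ({v1} : Set E3) := by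
    rw [bot_lt_iff_ne_bot, Submodule.ne_bot_iff]
    exact ⟨v1, Submodule.subset_span rfl, h1⟩
  have l1 : Submodule.span ℝ ({v1} : Set E3) < Submodule.span ℝ ({v1, v2} : Set E3) :=
    lt_of_le_not_ge (Submodule.span_mono (by simp)) fun hle =>
      h2 (hle (Submodule.subset_span (by simp)))
  have l2 : Submodule.span ℝ ({v1, v2} : Set E3) < Submodule.span ℝ ({v1, v2, v3} : Set E3) :=
    lt_of_le_not_ge (Submodule.span_mono (by intro x hx; simp at hx; rcases hx with rfl|rfl <;> simp))
      fun hle => h3 (hle (Submodule.subset_span (by simp)))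
  have f0 := Submodule.finrank_lt_finrank_of_lt l0
  have f1 := Submodule.finrank_lt_finrank_of_lt l1
  have f2 := Submodule.finrank_lt_finrank_of_lt l2
  rw [finrank_bot] at f0
  have fle : Module.finrank ℝ (Submodule.span ℝ ({v1, v2, v3} : Set E3)) ≤ 3 := by
    have := Submodule.finrank_le (Submodule.span ℝ ({v1, v2, v3} : Set E3))
    simpa [finrank_euclideanSpace] using this
  have hcard : Module.finrank ℝ E3 = 3 := by simp [finrank_euclideanSpace]
  apply Submodule.eq_top_of_finrank_eq
  rw [hcard]; omega

lemma orth_span_triple {v a b c : E3}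
    (h1 : inner ℝ a v = (0:ℝ)) (h2 : inner ℝ b v = (0:ℝ)) (h3 : inner ℝ c v = (0:ℝ))
    (hspan : Submodule.span ℝ ({a, b, c} : Set E3) = ⊤) : v = 0 := by
  have hv : v ∈ (Submodule.span ℝ ({a, b, c} : Set E3))ᗮ := by
    rw [Submodule.mem_orthogonal]
    intro u hu
    induction hu using Submodule.span_induction with
    | mem x hx =>
      rcases hx with rfl | rfl | rfl <;> assumption
    | zero => simp
    | add x y _ _ hx hy => rw [inner_add_left, hx, hy, add_zero]
    | smul t x _ hx => rw [real_inner_smul_left, hx, mul_zero]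
  rw [hspan, Submodule.top_orthogonal_eq_bot] at hv
  exact hv

lemma sphere_eq_of_four (o1 o2 : E3) (r1 r2 : ℝ) (hr1 : 0 < r1) (hr2 : 0 < r2)
    (p q1 q2 q3 : E3)
    (hspan : Submodule.span ℝ ({q1 - p, q2 - p, q3 - p} : Set E3) = ⊤)
    (hp1 : p ∈ Metric.sphere o1 r1) (hq11 : q1 ∈ Metric.sphere o1 r1)
    (hq21 : q2 ∈ Metric.sphere o1 r1) (hq31 : q3 ∈ Metric.sphere o1 r1)
    (hp2 : p ∈ Metric.sphere o2 r2) (hq12 : q1 ∈ Metric.sphere o2 r2)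
    (hq22 : q2 ∈ Metric.sphere o2 r2) (hq32 : q3 ∈ Metric.sphere o2 r2) :
    o1 = o2 ∧ r1 = r2 := by
  have key : ∀ x : E3, x ∈ Metric.sphere o1 r1 → x ∈ Metric.sphere o2 r2 →
      2 * inner ℝ x (o2 - o1) = r1^2 - r2^2 + ‖o2‖^2 - ‖o1‖^2 := by
    intro x hx1 hx2
    have e1 : ‖x - o1‖^2 = r1^2 := by
      rw [← dist_eq_norm]; rw [Metric.mem_sphere] at hx1; rw [hx1]
    have e2 : ‖x - o2‖^2 = r2^2 := by
      rw [← dist_eq_norm]; rw [Metric.mem_sphere] at hx2; rw [hx2]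
    rw [norm_sub_sq_real] at e1 e2
    have : inner ℝ x (o2 - o1) = (inner ℝ x o2 : ℝ) - inner ℝ x o1 := inner_sub_right _ _ _
    rw [this]
    nlinarith [e1, e2]
  have kp := key p hp1 hp2
  have k1 := key q1 hq11 hq12
  have k2 := key q2 hq21 hq22
  have k3 := key q3 hq31 hq32
  have i1 : inner ℝ (q1 - p) (o2 - o1) = (0:ℝ) := by rw [inner_sub_left]; linarith
  have i2 : inner ℝ (q2 - p) (o2 - o1) = (0:ℝ) := by rw [inner_sub_left]; linarith
  have i3 : inner ℝ (q3 - p) (o2 - o1) = (0:ℝ) := by rw [inner_sub_left]; linarith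
  have ho : o2 - o1 = 0 := orth_span_triple i1 i2 i3 hspan
  have ho' : o1 = o2 := (sub_eq_zero.mp ho).symm
  refine ⟨ho', ?_⟩
  have hd1 : dist p o1 = r1 := hp1
  have hd2 : dist p o2 = r2 := hp2
  rw [ho'] at hd1; rw [hd1] at hd2; exact hd2

lemma span_top_of_gens {a b c : E3} (W : Submodule ℝ E3)
    (ha : a ∈ W) (hb : b ∈ W) (hc : c ∈ W)
    (h : Submodule.span ℝ ({a, b, c} : Set E3) = ⊤) : W = ⊤ := by
  rw [eq_top_iff, ← h, Submodule.span_le]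
  rintro x (rfl | rfl | rfl) <;> assumption

lemma triple_span (A B C D : E3)
    (h : Submodule.span ℝ ({B - A, C - A, D - A} : Set E3) = ⊤) :
    Submodule.span ℝ ({A, B, C} : Set E3) = ⊤ ∨
    Submodule.span ℝ ({A, B, D} : Set E3) = ⊤ ∨
    Submodule.span ℝ ({A, C, D} : Set E3) = ⊤ ∨
    Submodule.span ℝ ({B, C, D} : Set E3) = ⊤ := by
  have hA : -A ∈ Submodule.span ℝ ({B - A, C - A, D - A} : Set E3) := by
    rw [h]; trivial
  rw [Submodule.mem_span_insert] at hA
  obtain ⟨x, z1, hz1, hx⟩ := hA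
  rw [Submodule.mem_span_pair] at hz1
  obtain ⟨y, z, hz⟩ := hz1
  have hrep : -A = x • (B - A) + y • (C - A) + z • (D - A) := by
    rw [hx, ← hz]; abel
  have memA : ∀ (U V : E3) (W : Submodule ℝ E3), U ∈ W → V ∈ W → U - V ∈ W :=
    fun U V W hU hV => Submodule.sub_mem W hU hV
  by_cases hzz : z ≠ 0
  · left
    set W := Submodule.span ℝ ({A, B, C} : Set E3) with hW
    have hAW : A ∈ W := Submodule.subset_span (by simp)
    have hBW : B ∈ W := Submodule.subset_span (by simp)
    have hCW : C ∈ W := Submodule.subset_span (by simp)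
    have hu : B - A ∈ W := memA _ _ _ hBW hAW
    have hv : C - A ∈ W := memA _ _ _ hCW hAW
    have hw : D - A ∈ W := by
      have : D - A = z⁻¹ • (-A - x • (B - A) - y • (C - A)) := by
        rw [hrep]; match_scalars <;> (field_simp; try ring)
      rw [this]
      exact Submodule.smul_mem _ _ (Submodule.sub_mem _ (Submodule.sub_mem _
        (Submodule.neg_mem _ hAW) (Submodule.smul_mem _ _ hu)) (Submodule.smul_mem _ _ hv))
    exact span_top_of_gens W hu hv hw h
  · push_neg at hzz; subst hzz
    by_cases hyy : y ≠ 0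
    · right; left
      set W := Submodule.span ℝ ({A, B, D} : Set E3) with hW
      have hAW : A ∈ W := Submodule.subset_span (by simp)
      have hBW : B ∈ W := Submodule.subset_span (by simp)
      have hDW : D ∈ W := Submodule.subset_span (by simp)
      have hu : B - A ∈ W := memA _ _ _ hBW hAW
      have hw : D - A ∈ W := memA _ _ _ hDW hAW
      have hv : C - A ∈ W := by
        have : C - A = y⁻¹ • (-A - x • (B - A)) := by
          rw [hrep]; match_scalars <;> (field_simp; try ring)
        rw [this]
        exact Submodule.smul_mem _ _ (Submodule.sub_mem _
          (Submodule.neg_mem _ hAW) (Submodule.smul_mem _ _ hu))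
      exact span_top_of_gens W hu hv hw h
    · push_neg at hyy; subst hyy
      by_cases hxx : x ≠ 0
      · right; right; left
        set W := Submodule.span ℝ ({A, C, D} : Set E3) with hW
        have hAW : A ∈ W := Submodule.subset_span (by simp)
        have hCW : C ∈ W := Submodule.subset_span (by simp)
        have hDW : D ∈ W := Submodule.subset_span (by simp)
        have hv : C - A ∈ W := memA _ _ _ hCW hAW
        have hw : D - A ∈ W := memA _ _ _ hDW hAW
        have hu : B - A ∈ W := by
          have : B - A = x⁻¹ • (-A) := by
            rw [hrep]; match_scalars <;> (field_simp; try ring)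
          rw [this]
          exact Submodule.smul_mem _ _ (Submodule.neg_mem _ hAW)
        exact span_top_of_gens W hu hv hw h
      · push_neg at hxx; subst hxx
        right; right; right
        have hA0 : A = 0 := by
          have h0 : -A = 0 := by rw [hrep]; simp
          simpa [neg_eq_zero] using h0
        rw [hA0] at h
        simpa using h

lemma point_circle (o : E3) (r : ℝ) (hr : 0 < r) (a : E3) (ha : a ∈ Metric.sphere o r) :
    ∃ c, IsCircle c ∧ a ∈ c := by
  obtain ⟨u, hu1, huW⟩ := exists_unit_orth (Submodule.span ℝ {a - o}) (span_singleton_ne_top _)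
  refine ⟨Metric.sphere o r ∩ {x : E3 | inner ℝ (x - o) u = (0:ℝ)},
    ⟨o, r, _, hr, ⟨o, u, hu1, rfl⟩, ?_, rfl⟩, ha, ?_⟩
  · have ho : o ∈ {x : E3 | inner ℝ (x - o) u = (0:ℝ)} := by simp
    calc Metric.infDist o {x : E3 | inner ℝ (x - o) u = (0:ℝ)} ≤ dist o o :=
          Metric.infDist_le_dist_of_mem ho
      _ = 0 := dist_self o
      _ < r := hr
  · exact huW _ (Submodule.subset_span rfl)

lemma exists_spanning_quadruple (o : E3) (r : ℝ) (hr : 0 < r) (T : Set E3)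
    (hTs : T ⊆ Metric.sphere o r)
    (hnd : ¬ ∃ c : Set E3, IsCircle c ∧ T ⊆ c) :
    ∃ a ∈ T, ∃ b ∈ T, ∃ c ∈ T, ∃ d ∈ T,
      Submodule.span ℝ ({b - a, c - a, d - a} : Set E3) = ⊤ := by
  by_contra hcon
  push_neg at hcon
  apply hnd
  rcases Set.eq_empty_or_nonempty T with hTe | ⟨a, ha⟩
  · have hsne : (Metric.sphere o r).Nonempty := NormedSpace.sphere_nonempty.mpr hr.le
    obtain ⟨pt, hpt⟩ := hsne
    obtain ⟨c, hc, _⟩ := point_circle o r hr pt hpt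
    exact ⟨c, hc, by simp [hTe]⟩
  · set W := Submodule.span ℝ ((fun p => p - a) '' T) with hWdef
    have hW : W ≠ ⊤ := by
      intro htop
      have pick1 : ∃ b ∈ T, b - a ≠ 0 := by
        by_contra hall
        push_neg at hall
        have hsub : (fun p => p - a) '' T ⊆ {(0 : E3)} := by
          rintro v ⟨p, hp, rfl⟩; exact hall p hp
        have : W ≤ Submodule.span ℝ ({(0:E3)} : Set E3) := Submodule.span_mono hsub
        rw [htop] at this
        exact span_singleton_ne_top 0 (top_le_iff.mp this)
      obtain ⟨b, hb, hb0⟩ := pick1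
      have pick2 : ∃ c ∈ T, c - a ∉ Submodule.span ℝ ({b - a} : Set E3) := by
        by_contra hall
        push_neg at hall
        have hsub : (fun p => p - a) '' T ⊆ Submodule.span ℝ ({b - a} : Set E3) := by
          rintro v ⟨p, hp, rfl⟩; exact hall p hp
        have : W ≤ Submodule.span ℝ ({b - a} : Set E3) := by
          rw [hWdef, Submodule.span_le]; exact hsub
        rw [htop] at this
        exact span_singleton_ne_top _ (top_le_iff.mp this)
      obtain ⟨c, hc, hc0⟩ := pick2
      have pick3 : ∃ d ∈ T, d - a ∉ Submodule.span ℝ ({b - a, c - a} : Set E3) := by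
        by_contra hall
        push_neg at hall
        have hsub : (fun p => p - a) '' T ⊆ Submodule.span ℝ ({b - a, c - a} : Set E3) := by
          rintro v ⟨p, hp, rfl⟩; exact hall p hp
        have : W ≤ Submodule.span ℝ ({b - a, c - a} : Set E3) := by
          rw [hWdef, Submodule.span_le]; exact hsub
        rw [htop] at this
        exact span_pair_ne_top _ _ (top_le_iff.mp this)
      obtain ⟨d, hd, hd0⟩ := pick3
      exact hcon a ha b hb c hc d hd (span_triple_top_of hb0 hc0 hd0)
    obtain ⟨u, hu1, huW⟩ := exists_unit_orth W hW
    have hTu : ∀ p ∈ T, inner ℝ (p - a) u = (0:ℝ) := fun p hp =>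
      huW _ (Submodule.subset_span ⟨p, hp, rfl⟩)
    set t : ℝ := inner ℝ (o - a) u with htdef
    have ha_s : a ∈ Metric.sphere o r := hTs ha
    have hr2 : ‖a - o‖^2 = r^2 := by
      rw [← dist_eq_norm]; rw [Metric.mem_sphere] at ha_s; rw [ha_s]
    have hpytha := pyth o a u a hu1 (by simp)
    by_cases hlt : |t| < r
    · obtain ⟨c, hc, hsub⟩ := mk_circle o r hr a u hu1 T hTu hlt
      exact ⟨c, hc, fun p hp => hsub ⟨hp, hTs hp⟩⟩
    · push_neg at hlt
      have htr : r^2 ≤ t^2 := by nlinarith [abs_nonneg t, sq_abs t]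
      have hTa : ∀ p ∈ T, p = a := by
        intro p hp
        have hp2 : ‖p - o‖^2 = r^2 := by
          rw [← dist_eq_norm]
          have := hTs hp
          rw [Metric.mem_sphere] at this; rw [this]
        have hpy := pyth o a u p hu1 (hTu p hp)
        have hzero : ‖p - (o - t • u)‖ = 0 := by
          nlinarith [norm_nonneg (p - (o - t • u)), sq_nonneg ‖p - (o - t • u)‖]
        have hzeroa : ‖a - (o - t • u)‖ = 0 := by
          nlinarith [norm_nonneg (a - (o - t • u)), sq_nonneg ‖a - (o - t • u)‖]
        have e1 : p = o - t • u := sub_eq_zero.mp (norm_eq_zero.mp hzero)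
        have e2 : a = o - t • u := sub_eq_zero.mp (norm_eq_zero.mp hzeroa)
        rw [e1, e2]
      obtain ⟨c, hc, hac⟩ := point_circle o r hr a ha_s
      exact ⟨c, hc, fun p hp => (hTa p hp) ▸ hac⟩

lemma ncard_sprod {α β : Type*} (A : Set α) (B : Set β) :
    (A ×ˢ B).ncard = A.ncard * B.ncard := by
  rw [← Nat.card_coe_set_eq, ← Nat.card_coe_set_eq, ← Nat.card_coe_set_eq,
    Nat.card_congr (Equiv.Set.prod A B), Nat.card_prod]

end Aux

/-- Incidences with spheres none of which is strongly degenerate: at most m⁴ + 3n. -/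
theorem stmt_8 (P : Set E3) (S : Set (Set E3)) (m n : ℕ)
    (hPfin : P.Finite) (hm : P.ncard = m)
    (hSfin : S.Finite) (hn : S.ncard = n)
    (hS : ∀ s ∈ S, IsSphere s)
    (hdeg : ∀ s ∈ S, ¬ ∃ c : Set E3, IsCircle c ∧ P ∩ s ⊆ c) :
    (IncSet P S).ncard ≤ m ^ 4 + 3 * n := by
  classical
  have hinc : ∀ e : E3 × Set E3, e ∈ IncSet P S → ∃ q : E3 × E3 × E3,
      (q.1 ∈ P ∧ q.2.1 ∈ P ∧ q.2.2 ∈ P) ∧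
      (q.1 ∈ e.2 ∧ q.2.1 ∈ e.2 ∧ q.2.2 ∈ e.2) ∧
      Submodule.span ℝ ({q.1 - e.1, q.2.1 - e.1, q.2.2 - e.1} : Set E3) = ⊤ := by
    rintro ⟨p, s⟩ ⟨hp, hs, hps⟩
    obtain ⟨o, r, hr, rfl⟩ := hS s hs
    obtain ⟨a, ha, b, hb, c, hc, d, hd, hspan⟩ :=
      exists_spanning_quadruple o r hr (P ∩ Metric.sphere o r)
        Set.inter_subset_right (hdeg _ hs)
    have hsp' : Submodule.span ℝ
        ({(b - p) - (a - p), (c - p) - (a - p), (d - p) - (a - p)} : Set E3) = ⊤ := by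
      have e1 : (b - p) - (a - p) = b - a := by abel
      have e2 : (c - p) - (a - p) = c - a := by abel
      have e3 : (d - p) - (a - p) = d - a := by abel
      rw [e1, e2, e3]; exact hspan
    rcases triple_span (a - p) (b - p) (c - p) (d - p) hsp' with h | h | h | h
    · exact ⟨(a, b, c), ⟨ha.1, hb.1, hc.1⟩, ⟨ha.2, hb.2, hc.2⟩, h⟩
    · exact ⟨(a, b, d), ⟨ha.1, hb.1, hd.1⟩, ⟨ha.2, hb.2, hd.2⟩, h⟩
    · exact ⟨(a, c, d), ⟨ha.1, hc.1, hd.1⟩, ⟨ha.2, hc.2, hd.2⟩, h⟩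
    · exact ⟨(b, c, d), ⟨hb.1, hc.1, hd.1⟩, ⟨hb.2, hc.2, hd.2⟩, h⟩
  choose F hF using hinc
  set G : E3 × Set E3 → E3 × E3 × E3 × E3 :=
    fun e => if h : e ∈ IncSet P S then (e.1, F e h) else (e.1, e.1, e.1, e.1) with hGdef
  have hGval : ∀ e (h : e ∈ IncSet P S), G e = (e.1, F e h) := by
    intro e h; simp only [hGdef, dif_pos h]
  have hGinj : Set.InjOn G (IncSet P S) := by
    intro e he e' he' hG
    rw [hGval e he, hGval e' he'] at hG
    have h1 : e.1 = e'.1 := (Prod.ext_iff.mp hG).1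
    have h2 : F e he = F e' he' := (Prod.ext_iff.mp hG).2
    obtain ⟨o1, r1, hr1, hs1⟩ := hS e.2 he.2.1
    obtain ⟨o2, r2, hr2, hs2⟩ := hS e'.2 he'.2.1
    obtain ⟨⟨_, _, _⟩, ⟨hq1, hq2, hq3⟩, hsp⟩ := hF e he
    obtain ⟨⟨_, _, _⟩, ⟨hq1', hq2', hq3'⟩, hsp'⟩ := hF e' he'
    rw [h2] at hq1 hq2 hq3 hsp
    rw [← h1] at hsp'
    have hp1 : e.1 ∈ e.2 := he.2.2
    have hp2 : e.1 ∈ e'.2 := by rw [h1]; exact he'.2.2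
    rw [hs1] at hp1 hq1 hq2 hq3
    rw [hs2] at hp2 hq1' hq2' hq3'
    obtain ⟨ho, hr⟩ := sphere_eq_of_four o1 o2 r1 r2 hr1 hr2 e.1
      (F e' he').1 (F e' he').2.1 (F e' he').2.2 hsp'
      hp1 hq1 hq2 hq3 hp2 hq1' hq2' hq3'
    have h22 : e.2 = e'.2 := by rw [hs1, hs2, ho, hr]
    exact Prod.ext h1 h22
  have himg : G '' IncSet P S ⊆ P ×ˢ P ×ˢ P ×ˢ P := by
    rintro _ ⟨e, he, rfl⟩
    rw [hGval e he]
    obtain ⟨⟨hq1, hq2, hq3⟩, _, _⟩ := hF e he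
    exact ⟨he.1, hq1, hq2, hq3⟩
  have hPfin4 : (P ×ˢ P ×ˢ P ×ˢ P : Set (E3 × E3 × E3 × E3)).Finite :=
    hPfin.prod (hPfin.prod (hPfin.prod hPfin))
  calc (IncSet P S).ncard = (G '' IncSet P S).ncard :=
        (Set.ncard_image_of_injOn hGinj).symm
    _ ≤ (P ×ˢ P ×ˢ P ×ˢ P : Set (E3 × E3 × E3 × E3)).ncard :=
        Set.ncard_le_ncard himg hPfin4
    _ = m ^ 4 := by rw [ncard_sprod, ncard_sprod, ncard_sprod, hm]; ring
    _ ≤ m ^ 4 + 3 * n := Nat.le_add_right _ _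
end
end

section
/- Let σ ⊂ ℝᵈ be the interior of the convex hull of d+1 affinely independent points v₀, …, v_d, let f be the convex hull of a nonempty subset of {v₀, …, v_d} (a face of the simplex), and let H ⊂ ℝᵈ be an affine hyperplane that contains a point of the relative interior of f but does not contain f. Then H intersects σ. -/
open Set AffineMap

/-- If an affine hyperplane H in ℝᵈ meets the relative interior of a face f of a
simplex but does not contain f, then H meets the open simplex (the interior of the
convex hull of the vertices). -/
theorem stmt_13 (d : ℕ) (v : Fin (d + 1) → EuclideanSpace ℝ (Fin d))
    (hv : AffineIndependent ℝ v)
    (t : Set (Fin (d + 1))) (ht : t.Nonempty)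
    (H : Set (EuclideanSpace ℝ (Fin d)))
    (hH : ∃ (u : EuclideanSpace ℝ (Fin d)) (α : ℝ), u ≠ 0 ∧
      H = {x : EuclideanSpace ℝ (Fin d) | inner ℝ x u = α})
    (hmeet : (H ∩ intrinsicInterior ℝ (convexHull ℝ (v '' t))).Nonempty)
    (hnotcont : ¬ convexHull ℝ (v '' t) ⊆ H) :
    (H ∩ interior (convexHull ℝ (Set.range v))).Nonempty := by
  obtain ⟨u, α, hu, rfl⟩ := hH
  set f : Set (EuclideanSpace ℝ (Fin d)) := convexHull ℝ (v '' t) with hf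
  set S : Set (EuclideanSpace ℝ (Fin d)) := convexHull ℝ (Set.range v) with hS
  set g : EuclideanSpace ℝ (Fin d) → ℝ := fun x => inner ℝ x u with hg
  have hgcont : Continuous g := continuous_id.inner continuous_const
  have hgcombo : ∀ (a b : ℝ) (x y : EuclideanSpace ℝ (Fin d)),
      g (a • x + b • y) = a * g x + b * g y := by
    intro a b x y
    simp only [hg]
    rw [inner_add_left, real_inner_smul_left, real_inner_smul_left]
  -- p in H ∩ relint f
  obtain ⟨p, hpH, hpint⟩ := hmeet
  have hgp : g p = α := hpH
  have hpf : p ∈ f := intrinsicInterior_subset hpint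
  -- q in f off H
  obtain ⟨q, hqf, hqH⟩ : ∃ q ∈ f, g q ≠ α := by
    by_contra h
    push_neg at h
    exact hnotcont fun x hx => h x hx
  -- extension: ∃ ε > 0, lineMap q p (1+ε) ∈ f
  have hext : ∃ ε : ℝ, 0 < ε ∧ AffineMap.lineMap q p (1 + ε) ∈ f := by
    obtain ⟨p', hp'int, hp'⟩ := mem_intrinsicInterior.mp hpint
    have hqspan : q ∈ affineSpan ℝ f := subset_affineSpan ℝ f hqf
    have hpspan : p ∈ affineSpan ℝ f := subset_affineSpan ℝ f hpf
    set γ : ℝ → affineSpan ℝ f := fun ε =>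
      ⟨AffineMap.lineMap q p (1 + ε), AffineMap.lineMap_mem _ hqspan hpspan⟩ with hγ
    have hγcont : Continuous γ := by
      apply Continuous.subtype_mk
      simp only [AffineMap.lineMap_apply_module]
      fun_prop
    have hγ0 : γ 0 = p' := by
      apply Subtype.ext
      simp [hγ, hp']
    have : γ ⁻¹' (interior ((↑) ⁻¹' f : Set (affineSpan ℝ f))) ∈ nhds (0 : ℝ) := by
      apply hγcont.continuousAt.preimage_mem_nhds
      rw [hγ0]
      exact isOpen_interior.mem_nhds hp'int
    obtain ⟨δ, hδ, hball⟩ := Metric.mem_nhds_iff.mp this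
    refine ⟨δ/2, by positivity, ?_⟩
    have h2 : γ (δ/2) ∈ interior ((↑) ⁻¹' f : Set (affineSpan ℝ f)) := by
      apply hball
      rw [Metric.mem_ball, Real.dist_eq, sub_zero, abs_of_pos (by positivity : (0:ℝ) < δ/2)]
      linarith
    have h3 : γ (δ/2) ∈ ((↑) ⁻¹' f : Set (affineSpan ℝ f)) := interior_subset h2
    exact h3
  obtain ⟨ε, hε, hrf⟩ := hext
  set r := AffineMap.lineMap q p (1 + ε) with hr
  have hgr : g r = α + ε * (α - g q) := by
    simp only [hr, AffineMap.lineMap_apply_module]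
    rw [hgcombo]
    rw [hgp]; ring
  -- face points on both sides
  obtain ⟨q₁, hq₁f, hq₁⟩ : ∃ x ∈ f, g x < α := by
    rcases lt_or_gt_of_ne hqH with h | h
    · exact ⟨q, hqf, h⟩
    · exact ⟨r, hrf, by rw [hgr]; nlinarith⟩
  obtain ⟨q₂, hq₂f, hq₂⟩ : ∃ x ∈ f, α < g x := by
    rcases lt_or_gt_of_ne hqH with h | h
    · exact ⟨r, hrf, by rw [hgr]; nlinarith⟩
    · exact ⟨q, hqf, h⟩
  -- interior of S nonempty
  have hSconv : Convex ℝ S := convex_convexHull ℝ _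
  have hspan : affineSpan ℝ S = ⊤ := by
    rw [hS, affineSpan_convexHull]
    rw [hv.affineSpan_eq_top_iff_card_eq_finrank_add_one]
    simp [finrank_euclideanSpace_fin]
  obtain ⟨c, hc⟩ := (hSconv.interior_nonempty_iff_affineSpan_eq_top).mpr hspan
  have hfS : f ⊆ S := convexHull_mono (Set.image_subset_range v t)
  -- IVT helper
  have key : ∀ x ∈ S, ∀ c' ∈ interior S, g x ≠ α → g c' ≠ α →
      (g x < α → α < g c') → (α < g x → g c' < α) → ∃ z ∈ interior S, g z = α := by
    intro x hx y hy hgx hgy hor1 hor2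
    set φ : ℝ → EuclideanSpace ℝ (Fin d) := fun s => (1 - s) • y + s • x with hφ
    have hφcont : Continuous (g ∘ φ) := by fun_prop
    have h0 : (g ∘ φ) 0 = g y := by simp [hφ]
    have h1 : (g ∘ φ) 1 = g x := by simp [hφ]
    have : α ∈ (g ∘ φ) '' Ioo 0 1 := by
      rcases lt_or_gt_of_ne hgx with h | h
      · apply intermediate_value_Ioo' zero_le_one hφcont.continuousOn
        rw [h0, h1]; exact ⟨h, hor1 h⟩
      · apply intermediate_value_Ioo zero_le_one hφcont.continuousOn
        rw [h0, h1]; exact ⟨hor2 h, h⟩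
    obtain ⟨s, hs, hsα⟩ := this
    refine ⟨φ s, ?_, hsα⟩
    exact hSconv.combo_interior_self_mem_interior hy hx (by linarith [hs.2]) hs.1.le (by ring)
  rcases lt_trichotomy (g c) α with h | h | h
  · obtain ⟨z, hz, hzα⟩ := key q₂ (hfS hq₂f) c hc hq₂.ne' h.ne
      (fun h' => absurd h' (not_lt.mpr hq₂.le)) (fun _ => h)
    exact ⟨z, hzα, hz⟩
  · exact ⟨c, h, hc⟩
  · obtain ⟨z, hz, hzα⟩ := key q₁ (hfS hq₁f) c hc hq₁.ne h.ne'
      (fun _ => h) (fun h' => absurd h' (not_lt.mpr hq₁.le))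
    exact ⟨z, hzα, hz⟩
end
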